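/- For every positive integer r there exists a constant C_r > 0, depending only on r, such that for all positive integers a₁, …, a_r one has E[Y_{a₁} ⋯ Y_{a_r}] ≤ C_r · σ(a₁) ⋯ σ(a_r), and consequently E[Y_{a₁} ⋯ Y_{a_r}] ≤ C_r · a₁² ⋯ a_r². -/

import Mathlib

open MeasureTheory ProbabilityTheory Finset

lemma real_exp_tsum_div (x : ℝ) : ∑' n : ℕ, x ^ n / (n.factorial : ℝ) = Real.exp x := by
  rw [Real.exp_eq_exp_ℝ, NormedSpace.exp_eq_tsum_div]

lemma poisson_moment_bound {Ω : Type*} [MeasurableSpace Ω] (P : Measure Ω)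
    [IsProbabilityMeasure P] (X : Ω → ℕ) (hX : Measurable X) (lam : ℝ)
    (hlam0 : 0 ≤ lam) (hlam1 : lam ≤ 1)
    (hp : ∀ n : ℕ, P {ω | X ω = n} =
      ENNReal.ofReal (Real.exp (-lam) * lam ^ n / n.factorial))
    (r : ℕ) :
    Integrable (fun ω => (X ω : ℝ) ^ r) P ∧
      ∫ ω, (X ω : ℝ) ^ r ∂P ≤ Real.exp (2 ^ r) := by
  have hmeasR : Measurable fun ω => (X ω : ℝ) ^ r :=
    ((Measurable.of_discrete (f := fun n : ℕ => ((n : ℝ)) ^ r)).comp hX)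
  have hmap : ∀ n : ℕ, (P.map X) {n} =
      ENNReal.ofReal (Real.exp (-lam) * lam ^ n / n.factorial) := by
    intro n
    rw [Measure.map_apply hX (measurableSet_singleton n)]
    have : X ⁻¹' {n} = {ω | X ω = n} := by ext ω; simp
    rw [this, hp n]
  have hlin : ∫⁻ ω, ENNReal.ofReal ((X ω : ℝ) ^ r) ∂P
      = ∑' n : ℕ, ENNReal.ofReal ((n : ℝ) ^ r * (Real.exp (-lam) * lam ^ n / n.factorial)) := by
    have hm := lintegral_map (μ := P) (f := fun n : ℕ => ENNReal.ofReal ((n : ℝ) ^ r))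
      Measurable.of_discrete hX
    rw [← hm, lintegral_countable']
    congr 1
    ext n
    rw [hmap n, ← ENNReal.ofReal_mul (by positivity)]
  have hterm : ∀ n : ℕ, (n : ℝ) ^ r * (Real.exp (-lam) * lam ^ n / n.factorial)
      ≤ ((2 : ℝ) ^ r * lam) ^ n / n.factorial := by
    intro n
    have h1 : ((n : ℝ)) ^ r ≤ ((2 : ℝ) ^ r) ^ n := by
      have hn : (n : ℝ) ≤ (2 : ℝ) ^ n := by exact_mod_cast (Nat.lt_two_pow_self (n := n)).le
      calc ((n : ℝ)) ^ r ≤ ((2 : ℝ) ^ n) ^ r :=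
            pow_le_pow_left₀ (Nat.cast_nonneg n) hn r
        _ = ((2 : ℝ) ^ r) ^ n := by rw [← pow_mul, ← pow_mul, Nat.mul_comm]
    have h2 : Real.exp (-lam) * lam ^ n / n.factorial ≤ lam ^ n / n.factorial := by
      have he : Real.exp (-lam) ≤ 1 := by
        rw [← Real.exp_zero]
        exact Real.exp_le_exp.mpr (by linarith)
      gcongr
      nlinarith [pow_nonneg hlam0 n, Real.exp_pos (-lam)]
    calc (n : ℝ) ^ r * (Real.exp (-lam) * lam ^ n / n.factorial)
        ≤ ((2 : ℝ) ^ r) ^ n * (lam ^ n / n.factorial) :=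
          mul_le_mul h1 h2 (by positivity) (by positivity)
      _ = ((2 : ℝ) ^ r * lam) ^ n / n.factorial := by rw [mul_pow, mul_div_assoc]
  have hsum : Summable (fun n : ℕ => ((2 : ℝ) ^ r * lam) ^ n / n.factorial) :=
    Real.summable_pow_div_factorial _
  have hkey : ∫⁻ ω, ENNReal.ofReal ((X ω : ℝ) ^ r) ∂P
      ≤ ENNReal.ofReal (Real.exp (2 ^ r)) := by
    rw [hlin]
    calc ∑' n : ℕ, ENNReal.ofReal ((n : ℝ) ^ r * (Real.exp (-lam) * lam ^ n / n.factorial))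
        ≤ ∑' n : ℕ, ENNReal.ofReal (((2 : ℝ) ^ r * lam) ^ n / n.factorial) :=
          ENNReal.tsum_le_tsum fun n => ENNReal.ofReal_le_ofReal (hterm n)
      _ = ENNReal.ofReal (∑' n : ℕ, ((2 : ℝ) ^ r * lam) ^ n / n.factorial) :=
          (ENNReal.ofReal_tsum_of_nonneg (fun n => by positivity) hsum).symm
      _ = ENNReal.ofReal (Real.exp ((2 : ℝ) ^ r * lam)) := by rw [real_exp_tsum_div]
      _ ≤ ENNReal.ofReal (Real.exp (2 ^ r)) := by
          apply ENNReal.ofReal_le_ofReal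
          apply Real.exp_le_exp.mpr
          nlinarith [pow_pos (by norm_num : (0:ℝ) < 2) r]
  have hnn' : 0 ≤ᵐ[P] fun ω => (X ω : ℝ) ^ r :=
    Filter.Eventually.of_forall fun ω => by positivity
  have hint : Integrable (fun ω => (X ω : ℝ) ^ r) P := by
    refine ⟨hmeasR.aestronglyMeasurable, ?_⟩
    rw [hasFiniteIntegral_iff_ofReal hnn']
    exact lt_of_le_of_lt hkey ENNReal.ofReal_lt_top
  refine ⟨hint, ?_⟩
  rw [integral_eq_lintegral_of_nonneg_ae hnn' hmeasR.aestronglyMeasurable]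
  exact ENNReal.toReal_le_of_le_ofReal (Real.exp_nonneg _) hkey

theorem stmt2 {Ω : Type*} [MeasurableSpace Ω] (P : Measure Ω) [IsProbabilityMeasure P]
    (Z : ℕ → Ω → ℕ)
    (hmeas : ∀ k, Measurable (Z k))
    (hpois : ∀ k : ℕ, 1 ≤ k → ∀ n : ℕ,
      P {ω | Z k ω = n} =
        ENNReal.ofReal (Real.exp (-(1 / k)) * (1 / k : ℝ) ^ n / n.factorial))
    (hindep : iIndepFun Z P)
    (r : ℕ) (hr : 0 < r) :
    ∃ C : ℝ, 0 < C ∧ ∀ a : Fin r → ℕ, (∀ i, 0 < a i) →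
      (∫ ω, ∏ i, (∑ d ∈ (a i).divisors, (d : ℝ) * (Z d ω : ℝ)) ∂P
          ≤ C * ∏ i, (∑ d ∈ (a i).divisors, (d : ℝ))) ∧
      (∫ ω, ∏ i, (∑ d ∈ (a i).divisors, (d : ℝ) * (Z d ω : ℝ)) ∂P
          ≤ C * ∏ i, (a i : ℝ) ^ 2) := by
  classical
  set M : ℝ := Real.exp (2 ^ r) with hMdef
  have hMpos : 0 < M := Real.exp_pos _
  refine ⟨r * M, by positivity, ?_⟩
  intro a ha
  have hmom : ∀ d : ℕ, 1 ≤ d → Integrable (fun ω => (Z d ω : ℝ) ^ r) P ∧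
      ∫ ω, (Z d ω : ℝ) ^ r ∂P ≤ M := by
    intro d hd
    have hd0 : (0 : ℝ) < d := by exact_mod_cast hd
    exact poisson_moment_bound P (Z d) (hmeas d) (1 / d) (by positivity)
      (by rw [div_le_one hd0]; exact_mod_cast hd) (hpois d hd) r
  have hmomd : ∀ i : Fin r, ∀ d ∈ (a i).divisors,
      Integrable (fun ω => (Z d ω : ℝ) ^ r) P ∧ ∫ ω, (Z d ω : ℝ) ^ r ∂P ≤ M :=
    fun i d hd => hmom d (Nat.pos_of_mem_divisors hd)
  set σ : Fin r → ℝ := fun i => ∑ d ∈ (a i).divisors, (d : ℝ) with hσdef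
  have hσpos : ∀ i, 0 < σ i := by
    intro i
    apply Finset.sum_pos (fun d hd => by exact_mod_cast Nat.pos_of_mem_divisors hd)
    exact Nat.nonempty_divisors.mpr (ha i).ne'
  have hint_i : ∀ i : Fin r,
      Integrable (fun ω => ∑ d ∈ (a i).divisors, (d : ℝ) * (Z d ω : ℝ) ^ r) P :=
    fun i => integrable_finset_sum _ (fun d hd => ((hmomd i d hd).1).const_mul _)
  set g : Ω → ℝ := fun ω => ∑ i : Fin r,
      ((∏ j, σ j) / σ i) * ∑ d ∈ (a i).divisors, (d : ℝ) * (Z d ω : ℝ) ^ r with hgdef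
  have hgint : Integrable g P :=
    integrable_finset_sum _ (fun i _ => (hint_i i).const_mul _)
  -- pointwise bound
  have hpt : ∀ ω, ∏ i, (∑ d ∈ (a i).divisors, (d : ℝ) * (Z d ω : ℝ)) ≤ g ω := by
    intro ω
    set Y : Fin r → ℝ := fun i => ∑ d ∈ (a i).divisors, (d : ℝ) * (Z d ω : ℝ) with hYdef
    have hYnn : ∀ i, 0 ≤ Y i := fun i => Finset.sum_nonneg fun d _ => by positivity
    set X : Fin r → ℝ := fun i => Y i / σ i with hXdef
    have hXnn : ∀ i, 0 ≤ X i := fun i => div_nonneg (hYnn i) (hσpos i).le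
    have hpm : ∀ i, X i ^ r ≤ (1 / σ i) * ∑ d ∈ (a i).divisors, (d : ℝ) * (Z d ω : ℝ) ^ r := by
      intro i
      have h := Real.pow_arith_mean_le_arith_mean_pow (a i).divisors
        (fun d => (d : ℝ) / σ i) (fun d => (Z d ω : ℝ))
        (fun d _ => div_nonneg (Nat.cast_nonneg d) (hσpos i).le)
        (by rw [← Finset.sum_div, div_self (hσpos i).ne']) (fun d _ => Nat.cast_nonneg _) r
      have hL : (∑ d ∈ (a i).divisors, (d : ℝ) / σ i * (Z d ω : ℝ)) = X i := by
        rw [hXdef]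
        simp only [hYdef]
        rw [Finset.sum_div]
        exact Finset.sum_congr rfl fun d _ => by ring
      have hR : (∑ d ∈ (a i).divisors, (d : ℝ) / σ i * (Z d ω : ℝ) ^ r)
          = (1 / σ i) * ∑ d ∈ (a i).divisors, (d : ℝ) * (Z d ω : ℝ) ^ r := by
        rw [Finset.mul_sum]
        exact Finset.sum_congr rfl fun d _ => by ring
      rw [hL, hR] at h
      exact h
    obtain ⟨j0, -, hj0⟩ := Finset.exists_max_image (univ : Finset (Fin r)) X ⟨⟨0, hr⟩, mem_univ _⟩
    have h1 : ∏ i, Y i = (∏ i, σ i) * ∏ i, X i := by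
      rw [← Finset.prod_mul_distrib]
      refine Finset.prod_congr rfl fun i _ => ?_
      rw [hXdef]
      field_simp
      rw [mul_div_assoc, div_self (hσpos i).ne', mul_one]
    have h2 : ∏ i, X i ≤ ∑ i, X i ^ r := by
      calc ∏ i, X i ≤ ∏ _i : Fin r, X j0 :=
            Finset.prod_le_prod (fun i _ => hXnn i) (fun i _ => hj0 i (mem_univ i))
        _ = X j0 ^ r := by rw [Finset.prod_const, Finset.card_univ, Fintype.card_fin]
        _ ≤ ∑ i, X i ^ r :=
            Finset.single_le_sum (fun i _ => pow_nonneg (hXnn i) r) (mem_univ j0)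
    have hσprodpos : 0 < ∏ i, σ i := Finset.prod_pos fun i _ => hσpos i
    calc ∏ i, Y i = (∏ i, σ i) * ∏ i, X i := h1
      _ ≤ (∏ i, σ i) * ∑ i, X i ^ r := by
          exact mul_le_mul_of_nonneg_left h2 hσprodpos.le
      _ = ∑ i, (∏ j, σ j) * X i ^ r := by rw [Finset.mul_sum]
      _ ≤ g ω := by
          rw [hgdef]
          refine Finset.sum_le_sum fun i _ => ?_
          have := mul_le_mul_of_nonneg_left (hpm i) hσprodpos.le
          calc (∏ j, σ j) * X i ^ r
              ≤ (∏ j, σ j) * ((1 / σ i) * ∑ d ∈ (a i).divisors, (d : ℝ) * (Z d ω : ℝ) ^ r) :=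
                this
            _ = ((∏ j, σ j) / σ i) * ∑ d ∈ (a i).divisors, (d : ℝ) * (Z d ω : ℝ) ^ r := by
                ring
  -- value of ∫ g
  have hgval : ∫ ω, g ω ∂P = ∑ i : Fin r,
      ((∏ j, σ j) / σ i) * ∑ d ∈ (a i).divisors, (d : ℝ) * ∫ ω, (Z d ω : ℝ) ^ r ∂P := by
    rw [hgdef, integral_finset_sum _ (fun i _ => (hint_i i).const_mul _)]
    refine Finset.sum_congr rfl fun i _ => ?_
    rw [integral_const_mul, integral_finset_sum _ (fun d hd => ((hmomd i d hd).1).const_mul _)]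
    congr 1
    exact Finset.sum_congr rfl fun d _ => integral_const_mul _ _
  have hgle : ∫ ω, g ω ∂P ≤ (r * M) * ∏ i, σ i := by
    rw [hgval]
    have hbound : ∀ i ∈ (univ : Finset (Fin r)),
        ((∏ j, σ j) / σ i) * ∑ d ∈ (a i).divisors, (d : ℝ) * ∫ ω, (Z d ω : ℝ) ^ r ∂P
          ≤ M * ∏ j, σ j := by
      intro i _
      have hσprodpos : 0 < ∏ j, σ j := Finset.prod_pos fun j _ => hσpos j
      have hsle : ∑ d ∈ (a i).divisors, (d : ℝ) * ∫ ω, (Z d ω : ℝ) ^ r ∂P ≤ M * σ i := by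
        calc ∑ d ∈ (a i).divisors, (d : ℝ) * ∫ ω, (Z d ω : ℝ) ^ r ∂P
            ≤ ∑ d ∈ (a i).divisors, (d : ℝ) * M :=
              Finset.sum_le_sum fun d hd =>
                mul_le_mul_of_nonneg_left (hmomd i d hd).2 (Nat.cast_nonneg d)
          _ = M * σ i := by rw [hσdef, Finset.mul_sum]; exact Finset.sum_congr rfl fun d _ => by ring
      calc ((∏ j, σ j) / σ i) * ∑ d ∈ (a i).divisors, (d : ℝ) * ∫ ω, (Z d ω : ℝ) ^ r ∂P
          ≤ ((∏ j, σ j) / σ i) * (M * σ i) :=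
            mul_le_mul_of_nonneg_left hsle (by positivity)
        _ = M * ∏ j, σ j := by
            have hne : σ i ≠ 0 := (hσpos i).ne'
            field_simp
    calc ∑ i : Fin r, ((∏ j, σ j) / σ i) * ∑ d ∈ (a i).divisors, (d : ℝ) * ∫ ω, (Z d ω : ℝ) ^ r ∂P
        ≤ ∑ _i : Fin r, M * ∏ j, σ j := Finset.sum_le_sum hbound
      _ = (r * M) * ∏ i, σ i := by
          rw [Finset.sum_const, Finset.card_univ, Fintype.card_fin, nsmul_eq_mul]
          ring
  have h1 : ∫ ω, ∏ i, (∑ d ∈ (a i).divisors, (d : ℝ) * (Z d ω : ℝ)) ∂P ≤ (r * M) * ∏ i, σ i :=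
    le_trans
      (integral_mono_of_nonneg
        (Filter.Eventually.of_forall fun ω =>
          Finset.prod_nonneg fun i _ => Finset.sum_nonneg fun d _ => by positivity)
        hgint (Filter.Eventually.of_forall hpt))
      hgle
  refine ⟨h1, le_trans h1 ?_⟩
  have hσle : ∀ i, σ i ≤ (a i : ℝ) ^ 2 := by
    intro i
    have hsub : (a i).divisors ⊆ Finset.Icc 1 (a i) := by
      intro d hd
      rw [Finset.mem_Icc]
      exact ⟨Nat.pos_of_mem_divisors hd, Nat.le_of_dvd (ha i) (Nat.dvd_of_mem_divisors hd)⟩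
    calc σ i ≤ ∑ d ∈ Finset.Icc 1 (a i), (d : ℝ) :=
          Finset.sum_le_sum_of_subset_of_nonneg hsub (fun d _ _ => Nat.cast_nonneg d)
      _ ≤ (Finset.Icc 1 (a i)).card • (a i : ℝ) :=
          Finset.sum_le_card_nsmul _ _ _ (fun d hd => by
            exact_mod_cast (Finset.mem_Icc.mp hd).2)
      _ = (a i : ℝ) ^ 2 := by
          rw [Nat.card_Icc, Nat.add_sub_cancel, nsmul_eq_mul]
          ring
  have hprodle : ∏ i, σ i ≤ ∏ i, (a i : ℝ) ^ 2 :=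
    Finset.prod_le_prod (fun i _ => (hσpos i).le) (fun i _ => hσle i)
  exact mul_le_mul_of_nonneg_left hprodle (by positivity)
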